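/- Let σ_1, σ_2 ∈ Σ_{r^m}* with the concatenation σ_2·σ_1 nonempty, let σ ∈ Σ_{r^m}* be a nonempty word, and let k ∈ ℕ. Then ξ(σ_2·σ^k·σ_1) = a_k·ξ(σ_2·σ_1) + b_k·Γ_{σ_1}^{-1}(ξ(σ)), where a_k = (r^{|σ_2·σ_1|} − 1)/(r^{|σ_2·σ_1| + k·|σ|} − 1) and b_k = r^{|σ_2·σ_1|}·(r^{k·|σ|} − 1)/(r^{|σ_2·σ_1| + k·|σ|} − 1), and σ^k denotes the k-fold concatenation of σ. -/

import Mathlib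

/-- The alphabet `Σ_{r^m}` of digit vectors. -/
abbrev Alpha (r m : ℕ) := Fin m → Fin r
abbrev Word (r m : ℕ) := List (Alpha r m)

/-- `ρ(b₁⋯bₙ) = Σᵢ r^(i-1)·bᵢ` (least significant digit first), viewed in `ℝ^m`. -/
noncomputable def rho (r m : ℕ) : Word r m → (Fin m → ℝ)
  | [] => 0
  | b :: w => (fun j => (b j : ℝ)) + (r : ℝ) • rho r m w

/-- `Γ_σ(x) = r^|σ|·x + ρ(σ)`. -/
noncomputable def Gam (r m : ℕ) (σ : Word r m) (x : Fin m → ℝ) : Fin m → ℝ :=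
  (r : ℝ) ^ σ.length • x + rho r m σ

/-- The inverse bijection `Γ_σ⁻¹(y) = (y - ρ(σ))/r^|σ|`. -/
noncomputable def GamInv (r m : ℕ) (σ : Word r m) (y : Fin m → ℝ) : Fin m → ℝ :=
  ((r : ℝ) ^ σ.length)⁻¹ • (y - rho r m σ)

/-- `ξ(σ) = ρ(σ)/(1 - r^|σ|)` (meaningful for nonempty `σ`). -/
noncomputable def xi (r m : ℕ) (σ : Word r m) : Fin m → ℝ :=
  (1 - (r : ℝ) ^ σ.length)⁻¹ • rho r m σ

/-- `ρ(L) = {ρ(σ) : σ ∈ L}`. -/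
def rhoSet (r m : ℕ) (L : Set (Word r m)) : Set (Fin m → ℝ) :=
  {x | ∃ σ ∈ L, x = rho r m σ}

/-- `ξ(L) = {ξ(σ) : σ ∈ L, σ ≠ ε}`. -/
def xiSet (r m : ℕ) (L : Set (Word r m)) : Set (Fin m → ℝ) :=
  {x | ∃ σ ∈ L, σ ≠ [] ∧ x = xi r m σ}

/-- Kleene star of a language. -/
def kstar' {α : Type*} (L : Set (List α)) : Set (List α) :=
  {w | ∃ ws : List (List α), (∀ u ∈ ws, u ∈ L) ∧ w = ws.flatten}

/-- Concatenation of two languages. -/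
def catL {α : Type*} (A B : Set (List α)) : Set (List α) :=
  {w | ∃ a ∈ A, ∃ b ∈ B, w = a ++ b}

/-- `chainLang σ Ls n = σ_{n+1}·(L_n)*·σ_n ⋯ (L_1)*·σ_1`. -/
def chainLang {α : Type*} (σ : ℕ → List α) (Ls : ℕ → Set (List α)) : ℕ → Set (List α)
  | 0 => {σ 1}
  | n + 1 => catL {σ (n + 2)} (catL (kstar' (Ls (n + 1))) (chainLang σ Ls n))

/-- `catDown σ hi lo = σ_hi·σ_{hi-1}⋯σ_lo` (empty if `lo > hi`). -/
def catDown {α : Type*} (σ : ℕ → List α) (hi lo : ℕ) : List α :=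
  ((List.range (hi + 1 - lo)).map fun j => σ (hi - j)).flatten

/-- `catUp σ k = σ_1·σ_2⋯σ_k`. -/
def catUp {α : Type*} (σ : ℕ → List α) (k : ℕ) : List α :=
  ((List.range k).map fun j => σ (j + 1)).flatten

/-- `σ^k`, the `k`-fold concatenation of `σ`. -/
def repK {α : Type*} (σ : List α) (k : ℕ) : List α := (List.replicate k σ).flatten

/-- `ℝ₋·X = {t·x : t ≤ 0, x ∈ X}`. -/
def negSmul {m : ℕ} (X : Set (Fin m → ℝ)) : Set (Fin m → ℝ) :=
  {y | ∃ t : ℝ, t ≤ 0 ∧ ∃ x ∈ X, y = t • x}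

/-- The cone `C(R)` generated by a finite set of rays. -/
def coneOf {m : ℕ} (R : Finset ((Fin m → ℝ) × ℝ)) : Set ((Fin m → ℝ) × ℝ) :=
  {y | ∃ t : ((Fin m → ℝ) × ℝ) → ℝ, (∀ p, 0 ≤ t p) ∧ y = ∑ p ∈ R, t p • p}

/-- The polyhedral convex set `P(R) = {x : (x,1) ∈ C(R)}`. -/
def polyOf {m : ℕ} (R : Finset ((Fin m → ℝ) × ℝ)) : Set (Fin m → ℝ) :=
  {x | (x, (1 : ℝ)) ∈ coneOf R}


lemma rho_append' (r m : ℕ) (a b : Word r m) :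
    rho r m (a ++ b) = rho r m a + (r:ℝ)^a.length • rho r m b := by
  induction a with
  | nil => simp [rho]
  | cons h t ih =>
      funext j
      simp only [List.cons_append, rho, List.append_eq, ih, List.length_cons, pow_succ,
        Pi.add_apply, Pi.smul_apply, smul_eq_mul]
      ring

lemma rho_repK' (r m : ℕ) (σ : Word r m) (k : ℕ) :
    rho r m (repK σ k) = (∑ i ∈ Finset.range k, ((r:ℝ)^σ.length)^i) • rho r m σ := by
  induction k with
  | zero => simp [repK, rho]
  | succ k ih =>
      have h : repK σ (k+1) = σ ++ repK σ k := by
        simp [repK, List.replicate_succ]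
      rw [h, rho_append', ih, smul_smul, geom_sum_succ, add_smul, one_smul, add_comm]

lemma length_repK' {α : Type*} (σ : List α) (k : ℕ) :
    (repK σ k).length = k * σ.length := by
  simp [repK]

/-- the key identity expressing `ξ(σ₂·σ^k·σ₁)` as a combination of
`ξ(σ₂·σ₁)` and `Γ_{σ₁}⁻¹(ξ(σ))`. -/
theorem xi_middle_power
    (r m : ℕ) (hr : 2 ≤ r) (hm : 1 ≤ m)
    (σ₁ σ₂ σ : Word r m) (h₂₁ : σ₂ ++ σ₁ ≠ []) (hσ : σ ≠ []) (k : ℕ) :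
    xi r m (σ₂ ++ repK σ k ++ σ₁) =
      (((r : ℝ) ^ (σ₂ ++ σ₁).length - 1) /
          ((r : ℝ) ^ ((σ₂ ++ σ₁).length + k * σ.length) - 1)) • xi r m (σ₂ ++ σ₁) +
      ((r : ℝ) ^ (σ₂ ++ σ₁).length * ((r : ℝ) ^ (k * σ.length) - 1) /
          ((r : ℝ) ^ ((σ₂ ++ σ₁).length + k * σ.length) - 1)) •
        GamInv r m σ₁ (xi r m σ) := by
  have hx : (1:ℝ) < (r:ℝ) := by exact_mod_cast hr.trans_lt' one_lt_two
  set x : ℝ := (r:ℝ) with hxdef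
  have hN : 1 ≤ (σ₂ ++ σ₁).length := by
    cases h : (σ₂ ++ σ₁) with
    | nil => exact absurd h h₂₁
    | cons a t => simp [h]
  have hL : 1 ≤ σ.length := List.length_pos_iff.mpr hσ
  have hpow_ne_one : ∀ n : ℕ, 1 ≤ n → x ^ n ≠ 1 := fun n hn =>
    ne_of_gt (one_lt_pow₀ hx (by omega))
  have h1 : x ^ (σ₂ ++ σ₁).length ≠ 1 := hpow_ne_one _ hN
  have h2 : x ^ σ.length ≠ 1 := hpow_ne_one _ hL
  have h3 : x ^ ((σ₂ ++ σ₁).length + k * σ.length) ≠ 1 := hpow_ne_one _ (by omega)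
  have h1' : (1:ℝ) - x ^ (σ₂ ++ σ₁).length ≠ 0 := sub_ne_zero.mpr (Ne.symm h1)
  have h2' : (1:ℝ) - x ^ σ.length ≠ 0 := sub_ne_zero.mpr (Ne.symm h2)
  have h3' : (1:ℝ) - x ^ ((σ₂ ++ σ₁).length + k * σ.length) ≠ 0 :=
    sub_ne_zero.mpr (Ne.symm h3)
  have h1'' : x ^ (σ₂ ++ σ₁).length - 1 ≠ 0 := sub_ne_zero.mpr h1
  have h2'' : x ^ σ.length - 1 ≠ 0 := sub_ne_zero.mpr h2
  have h3'' : x ^ ((σ₂ ++ σ₁).length + k * σ.length) - 1 ≠ 0 := sub_ne_zero.mpr h3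
  have hx0 : x ≠ 0 := by positivity
  have hxp : ∀ n : ℕ, x ^ n ≠ 0 := fun n => pow_ne_zero n hx0
  have hN' : 1 ≤ σ₂.length + σ₁.length := by simpa using hN
  funext j
  simp only [xi, GamInv, rho_append', rho_repK', List.length_append, length_repK',
    geom_sum_eq h2, Pi.add_apply, Pi.smul_apply, Pi.sub_apply, smul_eq_mul,
    pow_add, pow_mul']
  have ha : x ^ σ₂.length ≠ 0 := hxp _
  have hb : x ^ σ₁.length ≠ 0 := hxp _
  have hc : x ^ σ.length - 1 ≠ 0 := h2''
  have hc' : (1:ℝ) - x ^ σ.length ≠ 0 := h2'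
  have h1a : x ^ σ₂.length * x ^ σ₁.length - 1 ≠ 0 := by
    rw [← pow_add]; exact sub_ne_zero.mpr (hpow_ne_one _ (by omega))
  have h1b : (1:ℝ) - x ^ σ₂.length * x ^ σ₁.length ≠ 0 := by
    rw [← pow_add]; exact sub_ne_zero.mpr (Ne.symm (hpow_ne_one _ (by omega)))
  have h3a : x ^ σ₂.length * x ^ σ₁.length * (x ^ σ.length) ^ k - 1 ≠ 0 := by
    rw [← pow_add, ← pow_mul', ← pow_add]
    exact sub_ne_zero.mpr (hpow_ne_one _ (by omega))
  have h3b : (1:ℝ) - x ^ σ₂.length * (x ^ σ.length) ^ k * x ^ σ₁.length ≠ 0 := by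
    rw [← pow_mul', ← pow_add, ← pow_add]
    exact sub_ne_zero.mpr (Ne.symm (hpow_ne_one _ (by omega)))
  generalize rho r m σ₂ j = A, rho r m σ₁ j = B, rho r m σ j = C at *
  generalize hA : x ^ σ₂.length = a at *
  generalize hB : x ^ σ₁.length = b at *
  generalize hC : x ^ σ.length = c at *
  rw [geom_sum_eq h2]
  have h3c : a * c ^ k * b - 1 ≠ 0 := by rw [mul_right_comm]; exact h3a
  field_simp
  ring
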